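/- Let X be a finite-dimensional real Hilbert space, let (x₀,y₀) ∈ X × X with ⟨x₀,y₀⟩ ≠ 0, and suppose (x,y) is a nearest point to (x₀,y₀) in the cross C, i.e. (x,y) ∈ C and ‖x−x₀‖² + ‖y−y₀‖² ≤ ‖u−x₀‖² + ‖v−y₀‖² for all (u,v) ∈ C. Then there exists a unique λ ∈ ℝ such that x + λ·y = x₀ and y + λ·x = y₀. -/

import Mathlib

open RealInnerProductSpace

lemma quad_aux' {a b : ℝ} (hb : 0 ≤ b) (h : ∀ t : ℝ, 0 ≤ a * t + b * t ^ 2) :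
    a = 0 := by
  set t : ℝ := -a / (b + 1) with ht
  have hb1 : (0:ℝ) < b + 1 := by linarith
  have ha : a = -(t * (b + 1)) := by rw [ht, neg_div, neg_mul, neg_neg, div_mul_cancel₀ _ hb1.ne']
  have h1 := h t
  have ht0 : t = 0 := by nlinarith [sq_nonneg t]
  simp [ht0] at ha; exact ha

lemma mem_span_of_inner_orth {X : Type*} [NormedAddCommGroup X] [InnerProductSpace ℝ X]
    [FiniteDimensional ℝ X] (v w : X)
    (h : ∀ u : X, ⟪u, v⟫ = 0 → ⟪w, u⟫ = 0) : ∃ c : ℝ, w = c • v := by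
  have hm : w ∈ ((ℝ ∙ v)ᗮ)ᗮ := by
    rw [Submodule.mem_orthogonal]
    intro u hu
    have hv : ⟪u, v⟫ = 0 := by
      have := hu v (Submodule.mem_span_singleton_self v)
      rwa [real_inner_comm] at this
    have := h u hv
    rwa [real_inner_comm] at this
  rw [Submodule.orthogonal_orthogonal] at hm
  obtain ⟨c, hc⟩ := Submodule.mem_span_singleton.mp hm
  exact ⟨c, hc.symm⟩

theorem cross_nearest_point_lagrange_multiplier
    {X : Type*} [NormedAddCommGroup X] [InnerProductSpace ℝ X] [FiniteDimensional ℝ X]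
    (x₀ y₀ x y : X) (h : ⟪x₀, y₀⟫ ≠ 0) (hxy : ⟪x, y⟫ = 0)
    (hmin : ∀ u v : X, ⟪u, v⟫ = 0 →
      ‖x - x₀‖ ^ 2 + ‖y - y₀‖ ^ 2 ≤ ‖u - x₀‖ ^ 2 + ‖v - y₀‖ ^ 2) :
    ∃! lam : ℝ, x + lam • y = x₀ ∧ y + lam • x = y₀ := by
  have hyx : ⟪y, x⟫ = 0 := by rwa [real_inner_comm] at hxy
  -- Step A: x - x₀ ∈ span y
  have hA : ∃ c : ℝ, x - x₀ = c • y := by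
    apply mem_span_of_inner_orth
    intro w hw
    have key : (2 * ⟪x - x₀, w⟫) = 0 := by
      apply quad_aux' (b := ‖w‖ ^ 2) (sq_nonneg _)
      intro t
      have hfeas : ⟪x + t • w, y⟫ = 0 := by
        rw [inner_add_left, real_inner_smul_left, hw, hxy]; ring
      have hle := hmin (x + t • w) y hfeas
      have hrw : x + t • w - x₀ = (x - x₀) + t • w := by abel
      rw [hrw, norm_add_sq_real, real_inner_smul_right, norm_smul, mul_pow,
        Real.norm_eq_abs, sq_abs] at hle
      nlinarith [hle]
    linarith
  -- Step A': y - y₀ ∈ span x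
  have hB : ∃ d : ℝ, y - y₀ = d • x := by
    apply mem_span_of_inner_orth
    intro w hw
    have key : (2 * ⟪y - y₀, w⟫) = 0 := by
      apply quad_aux' (b := ‖w‖ ^ 2) (sq_nonneg _)
      intro t
      have hfeas : ⟪x, y + t • w⟫ = 0 := by
        rw [inner_add_right, real_inner_smul_right, hxy]
        rw [real_inner_comm] at hw
        rw [hw]; ring
      have hle := hmin x (y + t • w) hfeas
      have hrw : y + t • w - y₀ = (y - y₀) + t • w := by abel
      rw [hrw, norm_add_sq_real, real_inner_smul_right, norm_smul, mul_pow,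
        Real.norm_eq_abs, sq_abs] at hle
      nlinarith [hle]
    linarith
  obtain ⟨c, hc⟩ := hA
  obtain ⟨d, hd⟩ := hB
  -- Existence of lam with x - x₀ = -lam • y and y - y₀ = -lam • x
  have hex : ∃ lam : ℝ, x + lam • y = x₀ ∧ y + lam • x = y₀ := by
    by_cases hx0 : x = 0
    · refine ⟨-c, ?_, ?_⟩
      · rw [neg_smul, ← hc]; abel
      · rw [hx0, smul_zero, add_zero]
        have : y - y₀ = 0 := by rw [hd, hx0, smul_zero]
        linear_combination (norm := abel) this
    · by_cases hy0 : y = 0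
      · refine ⟨-d, ?_, ?_⟩
        · rw [hy0, smul_zero, add_zero]
          have : x - x₀ = 0 := by rw [hc, hy0, smul_zero]
          linear_combination (norm := abel) this
        · rw [neg_smul, ← hd]; abel
      · -- both nonzero; show c = d
        have hP : (0:ℝ) < ‖x‖ ^ 2 := pow_pos (norm_pos_iff.mpr hx0) 2
        have hQ : (0:ℝ) < ‖y‖ ^ 2 := pow_pos (norm_pos_iff.mpr hy0) 2
        have hcd : c = d := by
          have key : (2 * (‖x‖ ^ 2 * ‖y‖ ^ 2) * (c - d)) = 0 := by
            apply quad_aux' (b := ‖x‖ ^ 2 * ‖x‖ ^ 2 * ‖y‖ ^ 2 + ‖x‖ ^ 2 * ‖y‖ ^ 2 * ‖y‖ ^ 2)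
              (by positivity)
            intro t
            have hfeas : ⟪x + (t * ‖x‖ ^ 2) • y, y + (-t * ‖y‖ ^ 2) • x⟫ = 0 := by
              rw [inner_add_left, inner_add_right, inner_add_right,
                real_inner_smul_left, real_inner_smul_left, real_inner_smul_right,
                real_inner_smul_right, hxy, hyx, real_inner_self_eq_norm_sq,
                real_inner_self_eq_norm_sq]
              ring
            have hle := hmin (x + (t * ‖x‖ ^ 2) • y) (y + (-t * ‖y‖ ^ 2) • x) hfeas
            have hr1 : x + (t * ‖x‖ ^ 2) • y - x₀ = (c + t * ‖x‖ ^ 2) • y := by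
              rw [add_smul, ← hc]; abel
            have hr2 : y + (-t * ‖y‖ ^ 2) • x - y₀ = (d + -t * ‖y‖ ^ 2) • x := by
              rw [add_smul, ← hd]; abel
            rw [hr1, hr2, hc, hd] at hle
            rw [norm_smul, norm_smul, norm_smul, norm_smul, mul_pow, mul_pow,
              mul_pow, mul_pow, Real.norm_eq_abs, Real.norm_eq_abs,
              Real.norm_eq_abs, Real.norm_eq_abs, sq_abs, sq_abs, sq_abs, sq_abs] at hle
            nlinarith [hle]
          have := mul_eq_zero.mp key
          rcases this with h1 | h1
          · nlinarith
          · linarith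
        refine ⟨-c, ?_, ?_⟩
        · rw [neg_smul, ← hc]; abel
        · rw [neg_smul, hcd, ← hd]; abel
  obtain ⟨lam, h1, h2⟩ := hex
  refine ⟨lam, ⟨h1, h2⟩, ?_⟩
  rintro mu ⟨g1, g2⟩
  by_contra hne
  have hy0 : y = 0 := by
    have : (mu - lam) • y = 0 := by
      rw [sub_smul, sub_eq_zero]
      have := g1.trans h1.symm
      exact add_left_cancel this
    rcases smul_eq_zero.mp this with h' | h'
    · exact absurd (by linarith [sub_eq_zero.mp h']) hne
    · exact h'
  have hx0 : x = 0 := by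
    have : (mu - lam) • x = 0 := by
      rw [sub_smul, sub_eq_zero]
      have := g2.trans h2.symm
      exact add_left_cancel this
    rcases smul_eq_zero.mp this with h' | h'
    · exact absurd (by linarith [sub_eq_zero.mp h']) hne
    · exact h'
  apply h
  have hx₀ : x₀ = 0 := by rw [← h1, hx0, hy0, smul_zero, add_zero]
  rw [hx₀, inner_zero_left]
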